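/- arXiv:2109.15243 — 2 statements merged into one kernel-verified Lean document; each statement's English description precedes it below -/
import Mathlib

section
/- For every positive integer n, h_{2n} < 0. -/
def t (n : ℕ) : ℤ := (-1) ^ ((Nat.digits 2 n).sum)

def h : ℕ → ℤ
  | 0 => 0
  | 1 => 1
  | (n + 2) => t (n + 2) * h (n + 1) + h n

lemma t_even (m : ℕ) : t (2 * m) = t m := by
  rcases Nat.eq_zero_or_pos m with rfl | hm
  · rfl
  · unfold t
    rw [Nat.digits_def' (by norm_num) (by omega)]
    simp [Nat.mul_div_cancel_left _ (by norm_num : 0 < 2), Nat.mul_mod_right]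

lemma t_odd (m : ℕ) : t (2 * m + 1) = -t m := by
  unfold t
  rw [Nat.digits_def' (by norm_num) (by omega)]
  have h1 : (2 * m + 1) % 2 = 1 := by omega
  have h2 : (2 * m + 1) / 2 = m := by omega
  rw [h1, h2]
  simp [pow_succ, pow_add, mul_comm]

lemma t_pm (n : ℕ) : t n = 1 ∨ t n = -1 := by
  unfold t
  rcases Nat.even_or_odd ((Nat.digits 2 n).sum) with he | ho
  · left; exact he.neg_one_pow
  · right; exact ho.neg_one_pow

lemma t_sq (n : ℕ) : t n * t n = 1 := by
  rcases t_pm n with h | h <;> rw [h] <;> ring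

lemma hB (k : ℕ) : h (2 * k + 2) = t (k + 1) * h (2 * k + 1) + h (2 * k) := by
  have : 2 * k + 2 = (2 * k) + 2 := by ring
  rw [this, h]
  have : 2 * k + 2 = 2 * (k + 1) := by ring
  rw [this, t_even]

lemma hA (k : ℕ) : h (2 * k + 3) = -(t (k + 1)) * h (2 * k) := by
  have e1 : 2 * k + 3 = (2 * k + 1) + 2 := by ring
  rw [e1, h]
  have e2 : 2 * k + 1 + 2 = 2 * (k + 1) + 1 := by ring
  rw [e2, t_odd]
  have e3 : 2 * k + 1 + 1 = 2 * k + 2 := by ring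
  rw [e3, hB]
  linear_combination (-h (2 * k + 1)) * t_sq (k + 1)

lemma grec (k : ℕ) : h (2 * k + 4) = h (2 * k + 2) - t (k + 2) * t (k + 1) * h (2 * k) := by
  have e1 : 2 * k + 4 = 2 * (k + 1) + 2 := by ring
  rw [e1, hB]
  have e2 : 2 * (k + 1) + 1 = 2 * k + 3 := by ring
  rw [e2, hA]
  have e3 : 2 * (k + 1) = 2 * k + 2 := by ring
  rw [e3]
  ring

lemma no_three (m : ℕ) (hyp : t (m + 3) * t (m + 2) = 1) : t (m + 2) * t (m + 1) = -1 := by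
  rcases Nat.even_or_odd m with ⟨a, ha⟩ | ⟨a, ha⟩
  · exfalso
    have e2 : m + 2 = 2 * (a + 1) := by omega
    have e3 : m + 3 = 2 * (a + 1) + 1 := by omega
    rw [e2, e3, t_odd, t_even] at hyp
    nlinarith [t_sq (a + 1)]
  · have e1 : m + 1 = 2 * (a + 1) := by omega
    have e2 : m + 2 = 2 * (a + 1) + 1 := by omega
    rw [e1, e2, t_odd, t_even]
    nlinarith [t_sq (a + 1)]

lemma t2val : t 2 = -1 := by
  have : (2 : ℕ) = 2 * 1 := rfl
  rw [this, t_even]; unfold t; simp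

lemma t3val : t 3 = 1 := by
  have : (3 : ℕ) = 2 * 1 + 1 := rfl
  rw [this, t_odd]; unfold t; simp

lemma h2val : h 2 = -1 := by
  have : h 2 = t 2 * h 1 + h 0 := rfl
  rw [this, t2val]; rfl

lemma h4val : h 4 = -1 := by
  have : h 4 = t 4 * h 3 + h 2 := rfl
  rw [this]
  have h3 : h 3 = 0 := by
    have := hA 0
    simpa [show h 0 = 0 from rfl] using this
  rw [h3, h2val]; ring

lemma h6val : h 6 = -2 := by
  have e := grec 1
  norm_num at e
  rw [e, h4val, t3val, t2val, h2val]
  norm_num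

lemma key : ∀ k : ℕ, h (2 * k + 2) < 0 := by
  intro k
  induction k using Nat.strong_induction_on with
  | _ k ih =>
    match k with
    | 0 => simpa [h2val] using (by norm_num : (-1 : ℤ) < 0)
    | 1 => simpa [h4val] using (by norm_num : (-1 : ℤ) < 0)
    | 2 =>
      have : 2 * 2 + 2 = 6 := by norm_num
      rw [this, h6val]; norm_num
    | (m + 3) =>
      have e : 2 * (m + 3) + 2 = 2 * (m + 2) + 4 := by ring
      rw [e, grec (m + 2)]
      have ih2 : h (2 * (m + 2) + 2) < 0 := ih (m + 2) (by omega)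
      have ih1 : h (2 * (m + 1) + 2) < 0 := ih (m + 1) (by omega)
      have ih0 : h (2 * m + 2) < 0 := ih m (by omega)
      have hp : t (m + 4) * t (m + 3) = 1 ∨ t (m + 4) * t (m + 3) = -1 := by
        rcases t_pm (m + 4) with h1 | h1 <;> rcases t_pm (m + 3) with h2 | h2 <;>
          rw [h1, h2] <;> norm_num
      rcases hp with hp | hp
      · have h32 : t (m + 3) * t (m + 2) = -1 := by
          have := no_three (m + 1) (by
            have e4 : m + 1 + 3 = m + 4 := by ring
            have e5 : m + 1 + 2 = m + 3 := by ring
            rw [e4, e5]; exact hp)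
          have e4 : m + 1 + 2 = m + 3 := by ring
          have e5 : m + 1 + 1 = m + 2 := by ring
          rwa [e4, e5] at this
        have e2 := grec (m + 1)
        rw [h32] at e2
        have i1 : 2 * (m + 1) + 4 = 2 * (m + 2) + 2 := by ring
        have i2 : 2 * (m + 1) + 2 = 2 * (m + 2) := by ring
        have i3 : 2 * (m + 1) = 2 * m + 2 := by ring
        rw [i1, i2, i3] at e2
        rw [hp]
        linarith
      · rw [hp]
        have i : h (2 * (m + 2)) = h (2 * (m + 1) + 2) := by
          rw [show 2 * (m + 2) = 2 * (m + 1) + 2 from by ring]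
        linarith

theorem stmt2 : ∀ n : ℕ, 0 < n → h (2 * n) < 0 := by
  intro n hn
  obtain ⟨k, rfl⟩ : ∃ k, n = k + 1 := ⟨n - 1, by omega⟩
  have : 2 * (k + 1) = 2 * k + 2 := by ring
  rw [this]
  exact key k
end

section
/- For every n ≥ 1, the sum over i from 1 to n of t_i · h_{2i-1} equals h_{2n}. -/
lemma t_two_mul (m : ℕ) (hm : 0 < m) : t (2 * m) = t m := by
  unfold t
  rw [Nat.digits_def' (by norm_num : 1 < 2) (by omega)]
  simp [Nat.mul_div_cancel_left, Nat.mul_mod_right]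

theorem stmt16 : ∀ n : ℕ, 1 ≤ n → (∑ i ∈ Finset.Icc 1 n, t i * h (2 * i - 1)) = h (2 * n) := by
  intro n hn
  induction n with
  | zero => omega
  | succ k ih =>
    rcases Nat.eq_or_lt_of_le hn with h0 | h0
    · simp [← h0]
      norm_num [t, h]
    · have hk : 1 ≤ k := by omega
      rw [Finset.sum_Icc_succ_top (by omega), ih hk]
      have h2 : 2 * (k + 1) = (2 * k) + 2 := by ring
      have h3 : 2 * k + 2 - 1 = 2 * k + 1 := by omega
      rw [h2, h3]
      show h (2*k) + t (k+1) * h (2*k+1) = t (2*k + 2) * h (2*k + 1) + h (2*k)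
      have : (2*k + 2) = 2 * (k+1) := by ring
      rw [this, t_two_mul (k+1) (by omega)]
      ring
end
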